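/- Let X be a Hilbert space over 𝕜 (𝕜 = ℝ or ℂ) and let A, B : X → X be bounded surjective linear operators such that ker B is finite-dimensional and rank(ker B) ≤ rank(ker A). Then there exists a bounded surjective linear operator T : X → X such that A = B ∘ T and rank(ker A) = rank(ker B) + rank(ker T) (cardinal addition); in particular, when rank(ker A) = k and rank(ker B) = ℓ with ℓ finite, rank(ker T) = k − ℓ. -/

import Mathlib

open Module Submodule

theorem stmt8 (𝕜 X : Type*) [RCLike 𝕜] [NormedAddCommGroup X]
    [InnerProductSpace 𝕜 X] [CompleteSpace X]
    (A B : X →L[𝕜] X) (hA : Function.Surjective A) (hB : Function.Surjective B)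
    (hfin : FiniteDimensional 𝕜 (LinearMap.ker (B : X →ₗ[𝕜] X)))
    (hle : Module.rank 𝕜 (LinearMap.ker (B : X →ₗ[𝕜] X)) ≤ Module.rank 𝕜 (LinearMap.ker (A : X →ₗ[𝕜] X))) :
    ∃ T : X →L[𝕜] X, Function.Surjective T ∧ A = B.comp T ∧
      Module.rank 𝕜 (LinearMap.ker (A : X →ₗ[𝕜] X)) =
        Module.rank 𝕜 (LinearMap.ker (B : X →ₗ[𝕜] X)) + Module.rank 𝕜 (LinearMap.ker (T : X →ₗ[𝕜] X)) := by
  classical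
  set K : Submodule 𝕜 X := LinearMap.ker (B : X →ₗ[𝕜] X) with hKdef
  haveI : FiniteDimensional 𝕜 K := hfin
  set l := Module.finrank 𝕜 K with hl
  have hrankK : Module.rank 𝕜 K = (l : Cardinal) := (Module.finrank_eq_rank 𝕜 K).symm
  have hle' : (l : Cardinal) ≤ Module.rank 𝕜 (LinearMap.ker (A : X →ₗ[𝕜] X)) := hrankK ▸ hle
  obtain ⟨s, hs_card, hs_li⟩ := le_rank_iff_exists_linearIndependent.mp hle'
  -- the family in X
  have hw_li : LinearIndependent 𝕜 (fun x : s => ((x : LinearMap.ker (A : X →ₗ[𝕜] X)) : X)) :=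
    hs_li.map' (LinearMap.ker (A : X →ₗ[𝕜] X)).subtype (Submodule.ker_subtype _)
  set F : Submodule 𝕜 X := Submodule.span 𝕜 (Set.range fun x : s => ((x : LinearMap.ker (A : X →ₗ[𝕜] X)) : X))
    with hFdef
  have hFle : F ≤ LinearMap.ker (A : X →ₗ[𝕜] X) := by
    rw [hFdef, Submodule.span_le]
    rintro _ ⟨x, rfl⟩
    exact ((x : LinearMap.ker (A : X →ₗ[𝕜] X))).2
  have hrankF : Module.rank 𝕜 F = (l : Cardinal) := by
    rw [hFdef, rank_span hw_li, Cardinal.mk_range_eq _ hw_li.injective, hs_card]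
  haveI : FiniteDimensional 𝕜 F := Module.finite_of_rank_eq_nat hrankF
  have hfinF : Module.finrank 𝕜 F = l := finrank_eq_of_rank_eq hrankF
  -- the iso between F and K
  let iso : F ≃ₗ[𝕜] K := LinearEquiv.ofFinrankEq _ _ (by rw [hfinF])
  let isoL : F ≃L[𝕜] K := iso.toContinuousLinearEquiv
  let C : X →L[𝕜] X :=
    K.subtypeL.comp ((isoL : F →L[𝕜] K).comp (orthogonalProjectionOnto F))
  have hCmem : ∀ x, C x ∈ K := fun x => (isoL (orthogonalProjectionOnto F x)).2
  have hCF : ∀ u : F, C u = (iso u : X) := by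
    intro u
    show (K.subtypeL ((isoL : F →L[𝕜] K) (orthogonalProjectionOnto F u)) : X) = _
    rw [orthogonalProjectionOnto_mem_subspace_eq_self]
    rfl
  have hC0 : ∀ x, C x = 0 ↔ x ∈ Fᗮ := by
    intro x
    rw [← Submodule.orthogonalProjectionOnto_eq_zero_iff (K := F)]
    constructor
    · intro h
      have : (isoL (orthogonalProjectionOnto F x) : X) = 0 := h
      have h2 : isoL (orthogonalProjectionOnto F x) = 0 := Subtype.ext this
      simpa using congrArg isoL.symm h2
    · intro h
      show (K.subtypeL ((isoL : F →L[𝕜] K) (orthogonalProjectionOnto F x)) : X) = 0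
      rw [h]
      simp
  -- the right inverse S of B with range Kᗮ
  let B' : Kᗮ →L[𝕜] X := B.comp Kᗮ.subtypeL
  have hinj : LinearMap.ker (B' : Kᗮ →ₗ[𝕜] X) = ⊥ := by
    rw [LinearMap.ker_eq_bot']
    intro m hm
    have : (m : X) ∈ K ⊓ Kᗮ := ⟨hm, m.2⟩
    rw [Submodule.inf_orthogonal_eq_bot] at this
    exact Subtype.ext this
  have hsurj : LinearMap.range (B' : Kᗮ →ₗ[𝕜] X) = ⊤ := by
    rw [LinearMap.range_eq_top]
    intro y
    obtain ⟨x, hx⟩ := hB y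
    refine ⟨⟨x - (orthogonalProjectionOnto K x : X), sub_starProjection_mem_orthogonal x⟩, ?_⟩
    have hk : ((orthogonalProjectionOnto K x : X)) ∈ K := (orthogonalProjectionOnto K x).2
    show B (x - (orthogonalProjectionOnto K x : X)) = y
    rw [map_sub, hx]
    have : B ((orthogonalProjectionOnto K x : X)) = 0 := hk
    rw [this, sub_zero]
  let e : Kᗮ ≃L[𝕜] X := ContinuousLinearEquiv.ofBijective B' hinj hsurj
  let S : X →L[𝕜] X := Kᗮ.subtypeL.comp (e.symm : X →L[𝕜] Kᗮ)
  have hSmem : ∀ x, S x ∈ Kᗮ := fun x => (e.symm x).2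
  have hBS : ∀ x, B (S x) = x := by
    intro x
    show B' (e.symm x) = x
    have : e (e.symm x) = x := e.apply_symm_apply x
    rwa [ContinuousLinearEquiv.coeFn_ofBijective] at this
  have hS0 : ∀ x, S x = 0 → x = 0 := by
    intro x hx
    have h1 : e.symm x = 0 := Subtype.ext hx
    have := congrArg e h1
    simpa using this
  have hSe : ∀ m : Kᗮ, S (e m) = (m : X) := by
    intro m
    show (Kᗮ.subtypeL (e.symm (e m)) : X) = m
    rw [e.symm_apply_apply]
    rfl
  -- the operator T
  refine ⟨S.comp A + C, ?_, ?_, ?_⟩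
  · -- surjective
    intro x
    set k : K := orthogonalProjectionOnto K x with hk
    have hk' : x - (k : X) ∈ Kᗮ := sub_starProjection_mem_orthogonal x
    obtain ⟨w, hw⟩ := hA (e ⟨x - (k : X), hk'⟩)
    set z : K := k - ⟨C w, hCmem w⟩ with hz
    set u : X := (iso.symm z : X) with hu
    have huF : u ∈ F := (iso.symm z).2
    have huker : A u = 0 := hFle huF
    refine ⟨w + u, ?_⟩
    have hCu : C u = (k : X) - C w := by
      have := hCF (iso.symm z)
      rw [iso.apply_symm_apply] at this
      rw [hu, this, hz]
      rfl
    show S (A (w + u)) + C (w + u) = x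
    rw [map_add A w u, huker, add_zero, hw, hSe, map_add C w u, hCu]
    show x - (k : X) + (C w + ((k : X) - C w)) = x
    abel
  · -- A = B ∘ T
    ext x
    show A x = B (S (A x) + C x)
    rw [map_add, hBS]
    have : B (C x) = 0 := hCmem x
    rw [this, add_zero]
  · -- rank equation
    have hker : LinearMap.ker ((S.comp A + C : X →L[𝕜] X) : X →ₗ[𝕜] X) = LinearMap.ker (A : X →ₗ[𝕜] X) ⊓ Fᗮ := by
      ext x
      simp only [LinearMap.mem_ker, Submodule.mem_inf]
      constructor
      · intro hx
        have hx' : S (A x) + C x = 0 := hx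
        have h1 : S (A x) ∈ K ⊓ Kᗮ :=
          ⟨by rw [eq_neg_of_add_eq_zero_left hx']; exact neg_mem (hCmem x), hSmem _⟩
        rw [Submodule.inf_orthogonal_eq_bot] at h1
        have hAx : A x = 0 := hS0 _ h1
        have hCx : C x = 0 := by rwa [hAx, map_zero, zero_add] at hx'
        exact ⟨hAx, (hC0 x).mp hCx⟩
      · rintro ⟨h1, h2⟩
        show S (A x) + C x = 0
        rw [show A x = 0 from h1, map_zero, zero_add]
        exact (hC0 x).mpr h2
    rw [hker]
    have hsup : F ⊔ (LinearMap.ker (A : X →ₗ[𝕜] X) ⊓ Fᗮ) = LinearMap.ker (A : X →ₗ[𝕜] X) := by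
      refine le_antisymm (sup_le hFle inf_le_left) ?_
      intro v hv
      have h1 : (orthogonalProjectionOnto F v : X) ∈ F := (orthogonalProjectionOnto F v).2
      have h2 : v - (orthogonalProjectionOnto F v : X) ∈ LinearMap.ker (A : X →ₗ[𝕜] X) ⊓ Fᗮ :=
        ⟨sub_mem hv (hFle h1), sub_starProjection_mem_orthogonal v⟩
      have : v = (orthogonalProjectionOnto F v : X) + (v - (orthogonalProjectionOnto F v : X)) := by abel
      rw [this]
      exact add_mem (Submodule.mem_sup_left h1) (Submodule.mem_sup_right h2)
    have hinf : F ⊓ (LinearMap.ker (A : X →ₗ[𝕜] X) ⊓ Fᗮ) = ⊥ := by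
      rw [← le_bot_iff, ← Submodule.inf_orthogonal_eq_bot F]
      exact inf_le_inf_left F inf_le_right
    have := Submodule.rank_sup_add_rank_inf_eq F (LinearMap.ker (A : X →ₗ[𝕜] X) ⊓ Fᗮ)
    rw [hsup, hinf, rank_bot, add_zero, hrankF, ← hrankK] at this
    exact this
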